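/- The reduction map m ↦ m mod 2^k is a surjective homomorphism from the Laver table (2^{k+1}, *_{k+1}) onto (2^k, *_k); that is, (m *_{k+1} n) mod 2^k = (m mod 2^k) *_k (n mod 2^k) for all m, n < 2^{k+1}. -/

import Mathlib

open Fin.NatCast in
/-- The defining equations of the `k`-th Laver table, as an operation on `Fin (2^k)`. -/
def IsLaver (k : ℕ) (f : Fin (2^k) → Fin (2^k) → Fin (2^k)) : Prop :=
  (∀ m, f m 0 = 0) ∧ (∀ m, f m 1 = m + 1) ∧
  (∀ m i, 1 < (i : ℕ) → f m i = f (f m (i - 1)) (f m 1))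

namespace LaverAux

open Fin.NatCast in
/-- The Laver axioms over an arbitrary (positive) size. -/
def Ax {S : ℕ} [NeZero S] (f : Fin S → Fin S → Fin S) : Prop :=
  (∀ m, f m 0 = 0) ∧ (∀ m, f m 1 = m + 1) ∧
  (∀ m i, 1 < (i : ℕ) → f m i = f (f m (i - 1)) (f m 1))

variable {S : ℕ} [NeZero S]

lemma spos : 0 < S := Nat.pos_of_ne_zero (NeZero.ne S)

lemma val_add_one (m : Fin S) : ((m + 1 : Fin S) : ℕ) = ((m : ℕ) + 1) % S := by
  rw [Fin.val_add, Fin.val_one']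
  conv_rhs => rw [Nat.add_mod]
  rw [Nat.mod_eq_of_lt m.isLt]

lemma val_sub_one (i : Fin S) (h : 1 ≤ (i : ℕ)) : ((i - 1 : Fin S) : ℕ) = (i : ℕ) - 1 := by
  rw [Fin.sub_def]
  simp only [Fin.val_one']
  have hS := spos (S := S)
  have hi := i.isLt
  rcases Nat.lt_or_ge 1 S with h2 | h2
  · rw [Nat.mod_eq_of_lt h2, show S - 1 + (i : ℕ) = ((i : ℕ) - 1) + S by omega,
      Nat.add_mod_right, Nat.mod_eq_of_lt (by omega)]
  · omega

lemma mod_succ_mod (a M : ℕ) (hM : 1 < M) : (a % M + 1) % M = (a + 1) % M := by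
  conv_rhs => rw [Nat.add_mod]
  rw [Nat.mod_eq_of_lt hM]

lemma succ_zero_or_lt (m : Fin S) : m + 1 = 0 ∨ m < m + 1 := by
  have hv := val_add_one m
  rcases Nat.lt_or_ge ((m : ℕ) + 1) S with h | h
  · right
    rw [Fin.lt_def, hv, Nat.mod_eq_of_lt h]
    omega
  · left
    have : (m : ℕ) + 1 = S := by have := m.isLt; omega
    apply Fin.ext
    rw [hv, this, Nat.mod_self, Fin.val_zero]

lemma val_succ_of_lt {m : Fin S} (h : (m : ℕ) + 1 < S) : ((m + 1 : Fin S) : ℕ) = (m : ℕ) + 1 := by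
  rw [val_add_one, Nat.mod_eq_of_lt h]

lemma eq_one_of_val {n : Fin S} (h0 : (n : ℕ) ≠ 0) (h1 : ¬ 1 < (n : ℕ)) : n = 1 := by
  apply Fin.ext
  rw [Fin.val_one']
  have := n.isLt
  rw [Nat.mod_eq_of_lt (by omega)]
  omega

lemma eq_zero_of_val {n : Fin S} (h0 : (n : ℕ) = 0) : n = 0 := by
  apply Fin.ext; rw [Fin.val_zero]; omega

section
variable {f : Fin S → Fin S → Fin S} (hf : Ax f)
include hf

/-- The recursion at a `Fin`-valued column index. -/
lemma ax_rec (m n : Fin S) (h : 1 < (n : ℕ)) : f m n = f (f m (n - 1)) (f m 1) := by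
  have := hf.2.2 m (n : ℕ) h
  rwa [Fin.cast_val_eq_self] at this

/-- Row `0` is the identity. -/
lemma zr : ∀ n : Fin S, f 0 n = n := by
  have key : ∀ j, ∀ n : Fin S, (n : ℕ) = j → f 0 n = n := by
    intro j
    induction j using Nat.strong_induction_on with
    | _ j ih =>
    intro n hj
    rcases Nat.lt_or_ge 1 (n : ℕ) with hn | hn
    · have hsub : ((n - 1 : Fin S) : ℕ) = (n : ℕ) - 1 := val_sub_one n (by omega)
      rw [ax_rec hf 0 n hn, hf.2.1, zero_add,
        ih ((n : ℕ) - 1) (by omega) (n - 1) hsub, hf.2.1]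
      apply Fin.ext
      rw [val_add_one, hsub, Nat.mod_eq_of_lt (by have := n.isLt; omega)]
      omega
    · rcases Nat.lt_or_ge 0 (n : ℕ) with hn0 | hn0
      · rw [show n = 1 from eq_one_of_val (by omega) (by omega), hf.2.1, zero_add]
      · rw [show n = 0 from eq_zero_of_val (by omega), hf.1]
  intro n
  exact key _ n rfl

/-- Wrap-around: the recursion extended once past the last column gives `0`. -/
lemma wrap (u : Fin S) (t : Fin S) (ht : (t : ℕ) = S - 1) : f (f u t) (f u 1) = 0 := by
  rcases Nat.lt_or_ge 1 S with hS | hS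
  · have h := hf.2.2 u S (by omega)
    rw [Fin.natCast_self] at h
    rw [hf.1 u] at h
    have ht' : (0 - 1 : Fin S) = t := by
      apply Fin.ext
      rw [Fin.sub_def]
      simp only [Fin.val_one', Fin.val_zero]
      rw [Nat.mod_eq_of_lt hS, Nat.add_zero, Nat.mod_eq_of_lt (by omega), ht]
    rw [ht'] at h
    exact h.symm
  · have h1 : S = 1 := by have := spos (S := S); omega
    subst h1
    exact Subsingleton.elim _ _

/-- The top row is constantly `0`. -/
lemma topRow (m : Fin S) (hm : (m : ℕ) = S - 1) : ∀ n : Fin S, f m n = 0 := by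
  have hm1 : f m 1 = 0 := by
    rw [hf.2.1]
    apply Fin.ext
    rw [val_add_one, hm, Fin.val_zero]
    have := spos (S := S)
    rw [show S - 1 + 1 = S by omega, Nat.mod_self]
  intro n
  rcases Nat.lt_or_ge 1 (n : ℕ) with hn | hn
  · rw [ax_rec hf m n hn, hm1, hf.1]
  · rcases Nat.lt_or_ge 0 (n : ℕ) with hn0 | hn0
    · rw [show n = 1 from eq_one_of_val (by omega) (by omega), hm1]
    · rw [show n = 0 from eq_zero_of_val (by omega), hf.1]
end

/-- Measure helper. -/
lemma mulS_lt {S a b s n : ℕ} (h : a + 1 ≤ b) (hs : s < S) : a * S + s < b * S + n :=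
  calc a * S + s < a * S + S := by omega
  _ = (a + 1) * S := by ring
  _ ≤ b * S := Nat.mul_le_mul_right S h
  _ ≤ b * S + n := Nat.le_add_right _ _

section
variable {f : Fin S → Fin S → Fin S} (hf : Ax f)
include hf

/-- Key growth lemma: every entry is `0` or exceeds its row index. -/
lemma Lgt : ∀ (m n : Fin S), (n : ℕ) ≠ 0 → f m n = 0 ∨ m < f m n := by
  have key : ∀ t, ∀ (m n : Fin S), (S - (m : ℕ)) * S + (n : ℕ) = t →
      (n : ℕ) ≠ 0 → f m n = 0 ∨ m < f m n := by
    intro t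
    induction t using Nat.strong_induction_on with
    | _ t ih =>
    intro m n hμ hn
    by_cases hm0 : (m : ℕ) = 0
    · right
      rw [eq_zero_of_val hm0, zr hf n, Fin.lt_def, Fin.val_zero]
      omega
    rcases Nat.lt_or_ge 1 (n : ℕ) with hn1 | hn1
    · have hsub : ((n - 1 : Fin S) : ℕ) = (n : ℕ) - 1 := val_sub_one n (by omega)
      rw [ax_rec hf m n hn1]
      have IH1 := ih ((S - (m : ℕ)) * S + ((n : ℕ) - 1))
        (by rw [← hμ]; exact Nat.add_lt_add_left (by omega) _) m (n - 1) (by rw [hsub]) (by rw [hsub]; omega)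
      set x := f m (n - 1) with hx
      rcases IH1 with hx0 | hxgt
      · rw [hx0, zr hf (f m 1), hf.2.1]
        exact succ_zero_or_lt m
      · have hxv : (m : ℕ) < (x : ℕ) := Fin.lt_def.mp hxgt
        have hs1 : ((m + 1 : Fin S) : ℕ) = (m : ℕ) + 1 :=
          val_succ_of_lt (by have := x.isLt; omega)
        have IH2 := ih ((S - (x : ℕ)) * S + ((m + 1 : Fin S) : ℕ))
          (by
            rw [← hμ]
            exact mulS_lt (by have := x.isLt; omega) (by rw [hs1]; have := x.isLt; omega))
          x (m + 1) rfl (by rw [hs1]; omega)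
        rw [hf.2.1]
        rcases IH2 with h | h
        · exact Or.inl h
        · exact Or.inr (lt_trans hxgt h)
    · rw [show n = 1 from eq_one_of_val (by omega) (by omega), hf.2.1]
      exact succ_zero_or_lt m
  intro m n hn
  exact key _ m n rfl hn

end
end LaverAux
namespace LaverAux

lemma small_quot {M a q : ℕ} (ha : a < 2*M) (hq : M * q ≤ a) : q ≤ 1 := by
  by_contra h
  push_neg at h
  have h2 : M * 2 ≤ M * q := Nat.mul_le_mul_left M h
  omega

section
variable {M : ℕ} [NeZero M]

/-- the reduction map -/
def pr (a : Fin (2*M)) : Fin M := ⟨(a : ℕ) % M, Nat.mod_lt _ spos⟩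

lemma prv (a : Fin (2*M)) : ((pr a : Fin M) : ℕ) = (a : ℕ) % M := rfl

lemma pr0 : pr (0 : Fin (2*M)) = 0 := by
  apply Fin.ext
  rw [prv, Fin.val_zero, Fin.val_zero, Nat.zero_mod]

lemma thom_aux (hM : 1 < M)
    (f : Fin (2*M) → Fin (2*M) → Fin (2*M)) (g : Fin M → Fin M → Fin M)
    (hf : Ax f) (hg : Ax g) (m n : Fin (2*M)) :
    ((f m n : ℕ)) % M = ((g (pr m) (pr n)) : ℕ) := by
  have h2M : 1 < 2*M := by omega
  have key : ∀ t, ∀ m n : Fin (2*M), (2*M - (m : ℕ)) * (2*M) + (n : ℕ) = t →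
      ((f m n : ℕ)) % M = ((g (pr m) (pr n)) : ℕ) := by
    intro t
    induction t using Nat.strong_induction_on with
    | _ t ih =>
    intro m n hμ
    by_cases hm0 : (m : ℕ) = 0
    · rw [show m = 0 from eq_zero_of_val hm0, zr hf n, pr0, zr hg, prv]
    by_cases hmt : (m : ℕ) = 2*M - 1
    · rw [topRow hf m hmt n]
      have hpr : ((pr m : Fin M) : ℕ) = M - 1 := by
        rw [prv, hmt, show 2*M - 1 = (M-1) + 1*M by omega, Nat.add_mul_mod_self_right,
          Nat.mod_eq_of_lt (by omega)]
      rw [topRow hg (pr m) hpr (pr n), Fin.val_zero, Fin.val_zero, Nat.zero_mod]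
    have hmlt := m.isLt
    have hs1 : ((m + 1 : Fin (2*M)) : ℕ) = (m : ℕ) + 1 := val_succ_of_lt (by omega)
    have hprs : pr (m + 1) = pr m + 1 := by
      apply Fin.ext
      rw [prv, hs1, val_add_one, prv, mod_succ_mod _ _ hM]
    by_cases hn0 : (n : ℕ) = 0
    · rw [show n = 0 from eq_zero_of_val hn0, hf.1, pr0, hg.1, Fin.val_zero,
        Fin.val_zero, Nat.zero_mod]
    by_cases hn1 : (n : ℕ) = 1
    · rw [show n = 1 from eq_one_of_val (by omega) (by omega), hf.2.1 m]
      have hpr1 : pr (1 : Fin (2*M)) = 1 := by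
        apply Fin.ext
        rw [prv, Fin.val_one', Fin.val_one', Nat.mod_eq_of_lt h2M, Nat.mod_eq_of_lt hM]
      rw [hpr1, hg.2.1, hs1, val_add_one, prv, mod_succ_mod _ _ hM]
    -- main case : 2 ≤ n
    have hn2 : 1 < (n : ℕ) := by omega
    have hnlt := n.isLt
    have hsub : ((n - 1 : Fin (2*M)) : ℕ) = (n : ℕ) - 1 := val_sub_one n (by omega)
    rw [ax_rec hf m n hn2, hf.2.1 m]
    set x := f m (n - 1) with hxdef
    have IH1 : ((x : ℕ)) % M = ((g (pr m) (pr (n - 1))) : ℕ) :=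
      ih _ (by rw [← hμ]; exact Nat.add_lt_add_left (by omega) _) m (n - 1) rfl
    have hxlt : (x : ℕ) < 2*M := x.isLt
    have hxc := Lgt hf m (n - 1) (by rw [hsub]; omega)
    rw [← hxdef] at hxc
    have hdm := Nat.div_add_mod (n : ℕ) M
    by_cases hvM : (n : ℕ) % M = 0
    · -- n = M
      rw [hvM] at hdm
      have hq1 : (n : ℕ) / M ≤ 1 := small_quot hnlt (by omega)
      have hnvM : (n : ℕ) = M := by
        rcases Nat.lt_or_ge ((n : ℕ) / M) 1 with h | h
        · rw [Nat.lt_one_iff.mp h, Nat.mul_zero] at hdm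
          omega
        · rw [le_antisymm hq1 h, Nat.mul_one] at hdm
          omega
      have prn0 : pr n = 0 := by
        apply Fin.ext
        rw [prv, hnvM, Nat.mod_self, Fin.val_zero]
      rw [prn0, hg.1 (pr m), Fin.val_zero]
      have hwr := wrap hg (pr m) (pr (n - 1))
        (by rw [prv, hsub, hnvM, Nat.mod_eq_of_lt (by omega)])
      rcases hxc with hx0 | hxgt
      · have hgz : (g (pr m) (pr (n - 1))) = 0 := by
          apply Fin.ext
          rw [Fin.val_zero, ← IH1, hx0, Fin.val_zero, Nat.zero_mod]
        rw [hgz, zr hg, hg.2.1] at hwr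
        have humval : ((m : ℕ) % M + 1) % M = 0 := by
          have := congrArg Fin.val hwr
          rwa [val_add_one, prv, Fin.val_zero] at this
        rw [hx0, zr hf (m + 1), hs1, ← mod_succ_mod (m : ℕ) M hM]
        exact humval
      · have hxv := Fin.lt_def.mp hxgt
        have IH2 := ih _ (by rw [← hμ]; exact mulS_lt (by omega) (by rw [hs1]; omega))
          x (m + 1) rfl
        rw [IH2, hprs]
        have hprx : pr x = g (pr m) (pr (n - 1)) := Fin.ext (by rw [prv, IH1])
        rw [hprx, ← hg.2.1 (pr m), hwr, Fin.val_zero]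
    by_cases hv1 : (n : ℕ) % M = 1
    · -- n = M + 1
      rw [hv1] at hdm
      have hq1 : (n : ℕ) / M ≤ 1 := small_quot hnlt (by omega)
      have hnvM : (n : ℕ) = M + 1 := by
        rcases Nat.lt_or_ge ((n : ℕ) / M) 1 with h | h
        · rw [Nat.lt_one_iff.mp h, Nat.mul_zero] at hdm
          omega
        · rw [le_antisymm hq1 h, Nat.mul_one] at hdm
          omega
      have prn1 : pr n = 1 := by
        apply Fin.ext
        rw [prv, hnvM, Nat.add_mod_left, Nat.mod_eq_of_lt hM, Fin.val_one',
          Nat.mod_eq_of_lt hM]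
      have prnsub : pr (n - 1) = 0 := by
        apply Fin.ext
        rw [prv, hsub, hnvM, Nat.add_sub_cancel, Nat.mod_self, Fin.val_zero]
      rw [prnsub, hg.1 (pr m)] at IH1
      rw [Fin.val_zero] at IH1
      rw [prn1, hg.2.1 (pr m), val_add_one, prv, mod_succ_mod _ _ hM]
      rcases hxc with hx0 | hxgt
      · rw [hx0, zr hf (m + 1), hs1]
      · have hxv := Fin.lt_def.mp hxgt
        have IH2 := ih _ (by rw [← hμ]; exact mulS_lt (by omega) (by rw [hs1]; omega))
          x (m + 1) rfl
        have hprx : pr x = 0 := by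
          apply Fin.ext
          rw [prv, IH1, Fin.val_zero]
        rw [IH2, hprx, zr hg, prv, hs1]
    -- 2 ≤ n % M
    · have hv2 : 1 < (n : ℕ) % M := by omega
      have hmodlt : (n : ℕ) % M < M := Nat.mod_lt _ (by omega)
      have hsubmod : ((n : ℕ) - 1) % M = (n : ℕ) % M - 1 := by
        have h1 : (n : ℕ) - 1 = M * ((n : ℕ) / M) + ((n : ℕ) % M - 1) := by omega
        rw [h1, Nat.mul_add_mod, Nat.mod_eq_of_lt (by omega)]
      have hprnv : ((pr n : Fin M) : ℕ) = (n : ℕ) % M := prv n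
      rw [ax_rec hg (pr m) (pr n) (by rw [hprnv]; omega), hg.2.1 (pr m)]
      have hprsub : pr n - 1 = pr (n - 1) := by
        apply Fin.ext
        rw [val_sub_one (pr n) (by rw [hprnv]; omega), hprnv, prv, hsub, hsubmod]
      have hprx : pr x = g (pr m) (pr (n - 1)) := Fin.ext (by rw [prv, IH1])
      rw [hprsub, ← hprx]
      rcases hxc with hx0 | hxgt
      · rw [hx0, zr hf (m + 1), hs1, pr0, zr hg, val_add_one, prv, mod_succ_mod _ _ hM]
      · have hxv := Fin.lt_def.mp hxgt
        have IH2 := ih _ (by rw [← hμ]; exact mulS_lt (by omega) (by rw [hs1]; omega))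
          x (m + 1) rfl
        rw [IH2, hprs]
  exact key _ m n rfl

end

lemma thom {N M : ℕ} [NeZero M] [NeZero N] (hNM : N = 2 * M)
    (f : Fin N → Fin N → Fin N) (g : Fin M → Fin M → Fin M)
    (hf : Ax f) (hg : Ax g) (m n : Fin N) :
    ((f m n : ℕ)) % M =
      ((g ⟨(m : ℕ) % M, Nat.mod_lt _ spos⟩ ⟨(n : ℕ) % M, Nat.mod_lt _ spos⟩ : Fin M) : ℕ) := by
  subst hNM
  rcases Nat.lt_or_ge 1 M with hM | hM
  · exact thom_aux hM f g hf hg m n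
  · have hM1 : M = 1 := by have := spos (S := M); omega
    subst hM1
    rw [Nat.mod_one, show (g ⟨(m : ℕ) % 1, Nat.mod_lt _ spos⟩ ⟨(n : ℕ) % 1, Nat.mod_lt _ spos⟩)
      = 0 from Subsingleton.elim _ _, Fin.val_zero]

end LaverAux

theorem laver_proj_hom (k : ℕ)
    (f : Fin (2^(k+1)) → Fin (2^(k+1)) → Fin (2^(k+1)))
    (g : Fin (2^k) → Fin (2^k) → Fin (2^k))
    (hf : IsLaver (k+1) f) (hg : IsLaver k g) :
    ∀ m n : Fin (2^(k+1)),
      ((f m n : ℕ) % 2^k) =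
        (g ⟨(m : ℕ) % 2^k, Nat.mod_lt _ (Nat.two_pow_pos k)⟩
           ⟨(n : ℕ) % 2^k, Nat.mod_lt _ (Nat.two_pow_pos k)⟩ : ℕ) := by
  intro m n
  exact LaverAux.thom (by rw [pow_succ]; ring) f g hf hg m n
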